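/- arXiv:2412.16867 — 2 statements merged into one kernel-verified Lean document; each statement's English description precedes it below -/
import Mathlib

section
/- (Key Lipschitz estimate for Theorem 3.) Let D ≥ 1, p ∈ [0, 1], N a natural number, ρ a D×D complex density matrix, O a D×D complex matrix, and U, V D×D unitary matrices. Let 𝓔_p(X) = (1 − p)X + p(Tr(X)/D)·I be the depolarizing channel and 𝓔_p^{∘N} its N-fold composition. Then |Tr(O·𝓔_p^{∘N}(UρUᴴ)) − Tr(O·𝓔_p^{∘N}(VρVᴴ))| ≤ (1 − p)^N·‖UᴴOU − VᴴOV‖, where ‖·‖ is the ℓ²→ℓ² operator norm. That is, under depolarizing noise the distance between noisy circuit outputs is contracted by the factor (1 − p)^N relative to the operator-norm distance between the conjugated observables. -/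
open Matrix
open scoped Matrix.Norms.L2Operator ComplexOrder

/-- The depolarizing channel with depolarization rate `p` on `D × D` complex matrices:
`𝓔_p(X) = (1 − p)·X + p·(Tr(X)/D)·I`. -/
noncomputable def depolarize (D : ℕ) (p : ℝ) (X : Matrix (Fin D) (Fin D) ℂ) :
    Matrix (Fin D) (Fin D) ℂ :=
  (1 - (p : ℂ)) • X + (p : ℂ) • ((X.trace / (D : ℂ)) • (1 : Matrix (Fin D) (Fin D) ℂ))


lemma depolarize_trace (D : ℕ) (hD : 1 ≤ D) (p : ℝ) (X : Matrix (Fin D) (Fin D) ℂ) :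
    (depolarize D p X).trace = X.trace := by
  have hDne : (D : ℂ) ≠ 0 := by
    exact_mod_cast Nat.cast_ne_zero.mpr (by omega)
  simp only [depolarize, trace_add, trace_smul, trace_one, smul_eq_mul, Fintype.card_fin]
  field_simp
  ring

lemma depolarize_sub (D : ℕ) (p : ℝ) (X Y : Matrix (Fin D) (Fin D) ℂ)
    (h : X.trace = Y.trace) :
    depolarize D p X - depolarize D p Y = (1 - (p : ℂ)) • (X - Y) := by
  simp only [depolarize, h]
  rw [smul_sub]
  abel

lemma depolarize_iterate_sub (D : ℕ) (hD : 1 ≤ D) (p : ℝ) (N : ℕ)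
    (X Y : Matrix (Fin D) (Fin D) ℂ) (h : X.trace = Y.trace) :
    (depolarize D p)^[N] X - (depolarize D p)^[N] Y = (1 - (p : ℂ)) ^ N • (X - Y) := by
  induction N generalizing X Y with
  | zero => simp
  | succ n ih =>
    rw [Function.iterate_succ_apply, Function.iterate_succ_apply,
      ih _ _ (by rw [depolarize_trace D hD, depolarize_trace D hD, h]),
      depolarize_sub D p X Y h, smul_smul, ← pow_succ]

/-- `|Tr(A ρ)| ≤ ‖A‖` for a density matrix `ρ`. -/
lemma abs_trace_mul_le (D : ℕ) (A ρ : Matrix (Fin D) (Fin D) ℂ)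
    (hρpos : ρ.PosSemidef) (hρtr : ρ.trace = 1) :
    ‖(A * ρ).trace‖ ≤ ‖A‖ := by
  have hH : ρ.IsHermitian := hρpos.1
  set W : Matrix (Fin D) (Fin D) ℂ := (hH.eigenvectorUnitary : Matrix (Fin D) (Fin D) ℂ) with hW
  have hWu : Wᴴ * W = 1 := by
    have := (Matrix.mem_unitaryGroup_iff').mp hH.eigenvectorUnitary.2
    rwa [star_eq_conjTranspose] at this
  have hspec : ρ = W * diagonal (RCLike.ofReal ∘ hH.eigenvalues) * Wᴴ := by
    simpa [hW, star_eq_conjTranspose] using hH.spectral_theorem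
  -- column norms
  have hcol : ∀ i, ‖(EuclideanSpace.equiv (Fin D) ℂ).symm (fun k => W k i)‖ = 1 := by
    intro i
    set x : EuclideanSpace ℂ (Fin D) := (EuclideanSpace.equiv (Fin D) ℂ).symm (fun k => W k i)
    have hinner : (inner ℂ x x : ℂ) = 1 := by
      have h := congrArg (fun M => M i i) hWu
      simp only [mul_apply, conjTranspose_apply, one_apply_eq] at h
      rw [← h, PiLp.inner_apply]; refine Finset.sum_congr rfl fun k _ => ?_; rw [RCLike.inner_apply']; rfl
    have h3 : (‖x‖ : ℝ) ^ 2 = 1 := by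
      have h4 := inner_self_eq_norm_sq_to_K (𝕜 := ℂ) x; rw [hinner] at h4; have h5 : ((‖x‖ ^ 2 : ℝ) : ℂ) = 1 := by push_cast; exact h4.symm
      exact_mod_cast h5
    nlinarith [norm_nonneg x]
  -- diagonal entries of WᴴAW bounded by ‖A‖
  have hdiag : ∀ i, ‖(Wᴴ * A * W) i i‖ ≤ ‖A‖ := by
    intro i
    set x : EuclideanSpace ℂ (Fin D) := (EuclideanSpace.equiv (Fin D) ℂ).symm (fun k => W k i)
      with hx
    have hentry : (Wᴴ * A * W) i i
        = inner ℂ x ((EuclideanSpace.equiv (Fin D) ℂ).symm (A.mulVec x)) := by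
      rw [show inner ℂ x ((EuclideanSpace.equiv (Fin D) ℂ).symm (A.mulVec x)) = ∑ j, (starRingEnd ℂ) (W j i) * (∑ k, A j k * W k i) from by simp only [PiLp.inner_apply, RCLike.inner_apply']; rfl]
      simp only [mul_apply, conjTranspose_apply, Finset.sum_mul]
      rw [Finset.sum_comm]
      refine Finset.sum_congr rfl fun j _ => ?_
      rw [Finset.mul_sum]
      refine Finset.sum_congr rfl fun k _ => ?_
      simp only [RCLike.star_def]
      ring
    rw [hentry]
    calc ‖inner ℂ x ((EuclideanSpace.equiv (Fin D) ℂ).symm (A.mulVec x))‖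
        = ‖(inner ℂ x ((EuclideanSpace.equiv (Fin D) ℂ).symm (A.mulVec x)) : ℂ)‖ := rfl
      _ ≤ ‖x‖ * ‖(EuclideanSpace.equiv (Fin D) ℂ).symm (A.mulVec x)‖ := norm_inner_le_norm _ _
      _ ≤ ‖x‖ * (‖A‖ * ‖x‖) := by gcongr; exact A.l2_opNorm_mulVec x
      _ = ‖A‖ := by rw [hcol i]; ring
  -- eigenvalues nonneg, sum to 1
  have hev : ∀ i, 0 ≤ hH.eigenvalues i := hρpos.eigenvalues_nonneg
  have hsum : ∑ i, hH.eigenvalues i = 1 := by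
    have h : ρ.trace = (diagonal (RCLike.ofReal ∘ hH.eigenvalues)).trace := by
      conv_lhs => rw [hspec]
      rw [trace_mul_cycle, hWu, one_mul]
    rw [hρtr, trace_diagonal] at h
    have h2 : ((1 : ℂ)) = ((∑ i, hH.eigenvalues i : ℝ) : ℂ) := by
      push_cast; simpa using h
    exact_mod_cast h2.symm
  -- main computation
  have htr : (A * ρ).trace = ∑ i, (Wᴴ * A * W) i i * (hH.eigenvalues i : ℂ) := by
    conv_lhs => rw [hspec]
    rw [show A * (W * diagonal (RCLike.ofReal ∘ hH.eigenvalues) * Wᴴ)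
        = A * W * diagonal (RCLike.ofReal ∘ hH.eigenvalues) * Wᴴ by
        simp only [Matrix.mul_assoc],
      trace_mul_cycle]
    rw [show Wᴴ * (A * W) * diagonal (RCLike.ofReal ∘ hH.eigenvalues)
        = (Wᴴ * A * W) * diagonal (RCLike.ofReal ∘ hH.eigenvalues) by
        simp only [Matrix.mul_assoc]]
    simp [Matrix.trace, Matrix.diag, mul_diagonal, Function.comp]
  rw [htr]
  calc ‖∑ i, (Wᴴ * A * W) i i * (hH.eigenvalues i : ℂ)‖
      ≤ ∑ i, ‖(Wᴴ * A * W) i i * (hH.eigenvalues i : ℂ)‖ :=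
        norm_sum_le _ _
    _ = ∑ i, ‖(Wᴴ * A * W) i i‖ * hH.eigenvalues i := by
        refine Finset.sum_congr rfl fun i _ => ?_
        rw [norm_mul]
        congr 1
        rw [Complex.norm_real, Real.norm_eq_abs, abs_of_nonneg (hev i)]
    _ ≤ ∑ i, ‖A‖ * hH.eigenvalues i := by
        apply Finset.sum_le_sum
        intro i _
        exact mul_le_mul_of_nonneg_right (hdiag i) (hev i)
    _ = ‖A‖ := by rw [← Finset.mul_sum, hsum, mul_one]

/-- Key Lipschitz estimate for Theorem 3: under `N` layers of depolarizing noise, the distance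
between noisy circuit outputs is contracted by `(1 − p)^N` relative to the operator-norm
distance between the conjugated observables. -/
theorem noisy_output_contraction (D : ℕ) (hD : 1 ≤ D) (p : ℝ) (hp : p ∈ Set.Icc (0 : ℝ) 1)
    (N : ℕ) (ρ O U V : Matrix (Fin D) (Fin D) ℂ)
    (hρherm : ρ.IsHermitian) (hρpos : ρ.PosSemidef) (hρtr : ρ.trace = 1)
    (hU : Uᴴ * U = 1) (hV : Vᴴ * V = 1) :
    ‖(O * (depolarize D p)^[N] (U * ρ * Uᴴ)).trace -
        (O * (depolarize D p)^[N] (V * ρ * Vᴴ)).trace‖ ≤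
      (1 - p) ^ N * ‖Uᴴ * O * U - Vᴴ * O * V‖ := by
  obtain ⟨hp0, hp1⟩ := hp
  have htrU : (U * ρ * Uᴴ).trace = 1 := by
    rw [trace_mul_cycle, hU, one_mul, hρtr]
  have htrV : (V * ρ * Vᴴ).trace = 1 := by
    rw [trace_mul_cycle, hV, one_mul, hρtr]
  have hdiff := depolarize_iterate_sub D hD p N (U * ρ * Uᴴ) (V * ρ * Vᴴ)
    (by rw [htrU, htrV])
  have hkey : (O * (depolarize D p)^[N] (U * ρ * Uᴴ)).trace -
      (O * (depolarize D p)^[N] (V * ρ * Vᴴ)).trace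
      = (1 - (p : ℂ)) ^ N * (((Uᴴ * O * U - Vᴴ * O * V) * ρ).trace) := by
    rw [← trace_sub, ← Matrix.mul_sub, hdiff, Matrix.mul_smul, trace_smul, smul_eq_mul]
    congr 1
    rw [Matrix.mul_sub, trace_sub, Matrix.sub_mul, trace_sub]
    congr 1
    · rw [show O * (U * ρ * Uᴴ) = (O * U * ρ) * Uᴴ by simp only [Matrix.mul_assoc],
        trace_mul_comm,
        show Uᴴ * (O * U * ρ) = (Uᴴ * O * U) * ρ by simp only [Matrix.mul_assoc]]
    · rw [show O * (V * ρ * Vᴴ) = (O * V * ρ) * Vᴴ by simp only [Matrix.mul_assoc],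
        trace_mul_comm,
        show Vᴴ * (O * V * ρ) = (Vᴴ * O * V) * ρ by simp only [Matrix.mul_assoc]]
  rw [hkey, norm_mul, norm_pow]
  have habs : ‖(1 - (p : ℂ))‖ = 1 - p := by
    rw [show (1 - (p : ℂ)) = ((1 - p : ℝ) : ℂ) by push_cast; ring,
      Complex.norm_real, Real.norm_eq_abs, abs_of_nonneg (by linarith)]
  rw [habs]
  exact mul_le_mul_of_nonneg_left
    (abs_trace_mul_le D (Uᴴ * O * U - Vᴴ * O * V) ρ hρpos hρtr)
    (pow_nonneg (by linarith) N)
end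

section
/- (Composite noisy-score Lipschitz bound underlying Theorem 3.) Let D ≥ 1, p ∈ [0, 1], N a natural number, ρ a D×D complex density matrix, O a D×D Hermitian matrix, c ∈ ℝ, R ∈ ℝ, and U, V D×D unitary matrices. Let 𝓔_p^{∘N} be the N-fold composition of the depolarizing channel 𝓔_p(X) = (1 − p)X + p(Tr(X)/D)·I, and define the noisy PEQAD score h_p(U) = (Re(Tr(O·𝓔_p^{∘N}(UρUᴴ))) − c)² − R². Then |h_p(U) − h_p(V)| ≤ (1 − p)^N·(2‖O‖ + 2|c|)·‖UᴴOU − VᴴOV‖, where ‖·‖ denotes the ℓ²→ℓ² operator norm. Hence under a local depolarizing noise channel affecting N gates, the Lipschitz constant of the PEQAD hypothesis map is reduced by the factor (1 − p)^N. -/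
open Matrix
open scoped Matrix.Norms.L2Operator ComplexOrder

lemma trace_bound {D : ℕ} (A M : Matrix (Fin D) (Fin D) ℂ) (hM : M.PosSemidef) :
    ‖(A * M).trace‖ ≤ ‖A‖ * M.trace.re := by
  obtain ⟨S, hSH, hSS⟩ : ∃ S : Matrix (Fin D) (Fin D) ℂ, S.IsHermitian ∧ S * S = M :=
    open scoped MatrixOrder in
    ⟨CFC.sqrt M, (CFC.sqrt_nonneg M).posSemidef.1, CFC.sqrt_mul_sqrt_self M hM.nonneg⟩
  set x : Fin D → EuclideanSpace ℂ (Fin D) := fun i => WithLp.toLp 2 (fun j => S j i) with hx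
  have hdiag : ∀ i, (S * (A * S)) i i = star (x i) ⬝ᵥ A *ᵥ (x i) := by
    intro i
    simp only [Matrix.mul_apply, dotProduct, Matrix.mulVec, hx]
    refine Finset.sum_congr rfl fun k _ => ?_
    simp only [Pi.star_apply]
    rw [← hSH.apply i k]
  have htr : (A * M).trace = ∑ i, star (x i) ⬝ᵥ A *ᵥ (x i) := by
    rw [← hSS, ← Matrix.mul_assoc, Matrix.trace_mul_cycle, Matrix.mul_assoc]
    exact Finset.sum_congr rfl fun i _ => hdiag i
  have hxnorm : ∀ i, ‖x i‖ ^ 2 = (M i i).re := by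
    intro i
    have h1 : M i i = ((∑ j, ‖S j i‖ ^ 2 : ℝ) : ℂ) := by
      rw [← hSS]
      simp only [Matrix.mul_apply]
      push_cast
      refine Finset.sum_congr rfl fun j _ => ?_
      rw [← hSH.apply j i]
      simp [Complex.star_def, Complex.mul_conj', Complex.normSq_eq_norm_sq, Complex.sq_norm]
    rw [h1, Complex.ofReal_re, EuclideanSpace.norm_eq,
      Real.sq_sqrt (Finset.sum_nonneg fun j _ => sq_nonneg _)]
  have hb : ∀ i, ‖star (x i) ⬝ᵥ A *ᵥ (x i)‖ ≤ ‖A‖ * (M i i).re := by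
    intro i
    have h1 : (inner ℂ (x i) ((EuclideanSpace.equiv (Fin D) ℂ).symm (A *ᵥ (x i))) : ℂ)
        = star (x i) ⬝ᵥ A *ᵥ (x i) :=
        (EuclideanSpace.inner_eq_star_dotProduct _ _).trans (dotProduct_comm _ _)
    rw [← h1]
    calc ‖(inner ℂ (x i) ((EuclideanSpace.equiv (Fin D) ℂ).symm (A *ᵥ (x i))) : ℂ)‖
        ≤ ‖x i‖ * ‖(EuclideanSpace.equiv (Fin D) ℂ).symm (A *ᵥ (x i))‖ := norm_inner_le_norm _ _
      _ ≤ ‖x i‖ * (‖A‖ * ‖x i‖) :=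
          mul_le_mul_of_nonneg_left (A.l2_opNorm_mulVec (x i)) (norm_nonneg _)
      _ = ‖A‖ * ‖x i‖ ^ 2 := by ring
      _ = ‖A‖ * (M i i).re := by rw [hxnorm i]
  calc ‖(A * M).trace‖ ≤ ∑ i, ‖star (x i) ⬝ᵥ A *ᵥ (x i)‖ := by
        rw [htr]; exact norm_sum_le _ _
    _ ≤ ∑ i, ‖A‖ * (M i i).re := Finset.sum_le_sum fun i _ => hb i
    _ = ‖A‖ * M.trace.re := by
        rw [← Finset.mul_sum, Matrix.trace, Complex.re_sum]
        rfl

lemma depolarize_iter {D : ℕ} (hD : (D : ℂ) ≠ 0) (p : ℝ) (N : ℕ)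
    (X : Matrix (Fin D) (Fin D) ℂ) (hX : X.trace = 1) :
    (depolarize D p)^[N] X = ((1 - (p : ℂ)) ^ N) • X +
      (1 - (1 - (p : ℂ)) ^ N) • (((D : ℂ))⁻¹ • (1 : Matrix (Fin D) (Fin D) ℂ)) := by
  induction N with
  | zero => simp
  | succ n ih =>
    rw [Function.iterate_succ_apply', ih]
    unfold depolarize
    have htr : ((1 - (p : ℂ)) ^ n • X +
        (1 - (1 - (p : ℂ)) ^ n) • ((D : ℂ))⁻¹ • (1 : Matrix (Fin D) (Fin D) ℂ)).trace = 1 := by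
      simp [Matrix.trace_add, Matrix.trace_smul, Matrix.trace_one, hX, smul_eq_mul]
      field_simp
      ring
    rw [htr]
    match_scalars <;> field_simp <;> ring

lemma psd_inv_smul_one {D : ℕ} : (((D : ℂ))⁻¹ • (1 : Matrix (Fin D) (Fin D) ℂ)).PosSemidef := by
  refine Matrix.posSemidef_iff_dotProduct_mulVec.mpr ⟨?_, ?_⟩
  · unfold Matrix.IsHermitian
    rw [Matrix.conjTranspose_smul, Matrix.conjTranspose_one]
    congr 1
    simp [← Complex.ofReal_natCast]
  · intro y
    have : star y ⬝ᵥ (((D : ℂ))⁻¹ • (1 : Matrix (Fin D) (Fin D) ℂ)) *ᵥ y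
        = ((D : ℂ))⁻¹ * (star y ⬝ᵥ y) := by
      simp [Matrix.smul_mulVec, dotProduct_smul, smul_eq_mul]
    rw [this]
    refine mul_nonneg ?_ (dotProduct_star_self_nonneg y)
    rw [← Complex.ofReal_natCast, ← Complex.ofReal_inv]
    exact_mod_cast inv_nonneg.2 (Nat.cast_nonneg D)

/-- Composite noisy-score Lipschitz bound underlying Theorem 3: the noisy PEQAD score
`h_p(U) = (Re Tr(O · 𝓔_p^{∘N}(UρUᴴ)) − c)² − R²` satisfies
`|h_p(U) − h_p(V)| ≤ (1 − p)^N (2‖O‖ + 2|c|) ‖Uᴴ O U − Vᴴ O V‖`. -/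
theorem noisy_peqad_score_lipschitz (D : ℕ) (hD : 1 ≤ D) (p : ℝ)
    (hp : p ∈ Set.Icc (0 : ℝ) 1) (N : ℕ) (ρ O U V : Matrix (Fin D) (Fin D) ℂ)
    (c R : ℝ)
    (hρherm : ρ.IsHermitian) (hρpos : ρ.PosSemidef) (hρtr : ρ.trace = 1)
    (hO : O.IsHermitian) (hU : Uᴴ * U = 1) (hV : Vᴴ * V = 1) :
    |((((O * (depolarize D p)^[N] (U * ρ * Uᴴ)).trace).re - c) ^ 2 - R ^ 2) -
        ((((O * (depolarize D p)^[N] (V * ρ * Vᴴ)).trace).re - c) ^ 2 - R ^ 2)| ≤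
      (1 - p) ^ N * (2 * ‖O‖ + 2 * |c|) * ‖Uᴴ * O * U - Vᴴ * O * V‖ := by
  have hDc : (D : ℂ) ≠ 0 := Nat.cast_ne_zero.2 (by omega)
  obtain ⟨hp0, hp1⟩ := hp
  have hq0 : (0:ℝ) ≤ 1 - p := by linarith
  have hq1 : (1:ℝ) - p ≤ 1 := by linarith
  have hqN0 : (0:ℝ) ≤ (1 - p) ^ N := pow_nonneg hq0 N
  have hqN1 : (1 - p) ^ N ≤ 1 := pow_le_one₀ hq0 hq1
  -- trace of conjugated state
  have trW : ∀ W : Matrix (Fin D) (Fin D) ℂ, Wᴴ * W = 1 → (W * ρ * Wᴴ).trace = 1 := by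
    intro W hW
    rw [Matrix.trace_mul_cycle, hW, one_mul, hρtr]
  have psdW : ∀ W : Matrix (Fin D) (Fin D) ℂ, (W * ρ * Wᴴ).PosSemidef := fun W =>
    hρpos.mul_mul_conjTranspose_same W
  -- cast facts
  have hcast : ((1 - p : ℝ) ^ N : ℂ) = (1 - (p:ℂ)) ^ N := by push_cast; ring
  -- trace of the mixed-state term
  have trOne : (((D : ℂ))⁻¹ • (1 : Matrix (Fin D) (Fin D) ℂ)).trace = 1 := by
    rw [Matrix.trace_smul, Matrix.trace_one, smul_eq_mul]
    simp only [Fintype.card_fin]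
    exact inv_mul_cancel₀ hDc
  -- key trace formula
  have key : ∀ W : Matrix (Fin D) (Fin D) ℂ, Wᴴ * W = 1 →
      (O * (depolarize D p)^[N] (W * ρ * Wᴴ)).trace
        = (1 - (p:ℂ)) ^ N * (O * (W * ρ * Wᴴ)).trace
          + (1 - (1 - (p:ℂ)) ^ N) * (O * (((D : ℂ))⁻¹ • (1 : Matrix (Fin D) (Fin D) ℂ))).trace := by
    intro W hW
    rw [depolarize_iter hDc p N _ (trW W hW), Matrix.mul_add, Matrix.trace_add,
      Matrix.mul_smul, Matrix.mul_smul, Matrix.trace_smul, Matrix.trace_smul,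
      smul_eq_mul, smul_eq_mul]
  -- cyclicity
  have cyc : ∀ W : Matrix (Fin D) (Fin D) ℂ,
      (O * (W * ρ * Wᴴ)).trace = ((Wᴴ * O * W) * ρ).trace := by
    intro W
    rw [show O * (W * ρ * Wᴴ) = (O * W * ρ) * Wᴴ by simp [Matrix.mul_assoc],
      Matrix.trace_mul_comm, show Wᴴ * (O * W * ρ) = (Wᴴ * O * W) * ρ by simp [Matrix.mul_assoc]]
  set a := (((O * (depolarize D p)^[N] (U * ρ * Uᴴ)).trace).re : ℝ) with ha
  set b := (((O * (depolarize D p)^[N] (V * ρ * Vᴴ)).trace).re : ℝ) with hb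
  set Δ := Uᴴ * O * U - Vᴴ * O * V with hΔ
  -- bound on each score
  have score_bound : ∀ W : Matrix (Fin D) (Fin D) ℂ, Wᴴ * W = 1 →
      |((O * (depolarize D p)^[N] (W * ρ * Wᴴ)).trace).re| ≤ ‖O‖ := by
    intro W hW
    have h1 : ‖(O * (W * ρ * Wᴴ)).trace‖ ≤ ‖O‖ := by
      have := trace_bound O (W * ρ * Wᴴ) (psdW W)
      rwa [trW W hW, Complex.one_re, mul_one] at this
    have h2 : ‖(O * (((D : ℂ))⁻¹ • (1 : Matrix (Fin D) (Fin D) ℂ))).trace‖ ≤ ‖O‖ := by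
      have := trace_bound O _ (psd_inv_smul_one (D := D))
      rwa [trOne, Complex.one_re, mul_one] at this
    calc |((O * (depolarize D p)^[N] (W * ρ * Wᴴ)).trace).re|
        ≤ ‖(O * (depolarize D p)^[N] (W * ρ * Wᴴ)).trace‖ := Complex.abs_re_le_norm _
      _ = ‖(1 - (p:ℂ)) ^ N * (O * (W * ρ * Wᴴ)).trace
          + (1 - (1 - (p:ℂ)) ^ N) * (O * (((D : ℂ))⁻¹ • (1 : Matrix (Fin D) (Fin D) ℂ))).trace‖ := by
          rw [key W hW]
      _ ≤ ‖(1 - (p:ℂ)) ^ N * (O * (W * ρ * Wᴴ)).trace‖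
          + ‖(1 - (1 - (p:ℂ)) ^ N) * (O * (((D : ℂ))⁻¹ • (1 : Matrix (Fin D) (Fin D) ℂ))).trace‖ :=
          norm_add_le _ _
      _ = (1 - p) ^ N * ‖(O * (W * ρ * Wᴴ)).trace‖
          + (1 - (1 - p) ^ N) * ‖(O * (((D : ℂ))⁻¹ • (1 : Matrix (Fin D) (Fin D) ℂ))).trace‖ := by
          rw [norm_mul, norm_mul]
          congr 1
          · congr 1
            rw [← hcast, ← Complex.ofReal_pow, Complex.norm_real, Real.norm_eq_abs, abs_of_nonneg hqN0]
          · congr 1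
            rw [show (1 - (1 - (p:ℂ)) ^ N) = ((1 - (1 - p) ^ N : ℝ) : ℂ) by push_cast; ring,
              Complex.norm_real, Real.norm_eq_abs, abs_of_nonneg (by linarith)]
      _ ≤ (1 - p) ^ N * ‖O‖ + (1 - (1 - p) ^ N) * ‖O‖ :=
          add_le_add (mul_le_mul_of_nonneg_left h1 hqN0)
            (mul_le_mul_of_nonneg_left h2 (by linarith))
      _ = ‖O‖ := by ring
  -- difference bound
  have diff_bound : |a - b| ≤ (1 - p) ^ N * ‖Δ‖ := by
    have hdiff : (O * (depolarize D p)^[N] (U * ρ * Uᴴ)).trace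
        - (O * (depolarize D p)^[N] (V * ρ * Vᴴ)).trace
        = (1 - (p:ℂ)) ^ N * (Δ * ρ).trace := by
      rw [key U hU, key V hV, cyc U, cyc V, hΔ, Matrix.sub_mul, Matrix.trace_sub]
      ring
    have hab : a - b = ((1 - (p:ℂ)) ^ N * (Δ * ρ).trace).re := by
      rw [ha, hb, ← Complex.sub_re, hdiff]
    rw [hab, ← hcast, ← Complex.ofReal_pow, Complex.re_ofReal_mul]
    have htb : ‖(Δ * ρ).trace‖ ≤ ‖Δ‖ := by
      have := trace_bound Δ ρ hρpos
      rwa [hρtr, Complex.one_re, mul_one] at this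
    calc |(1 - p) ^ N * ((Δ * ρ).trace).re|
        = (1 - p) ^ N * |((Δ * ρ).trace).re| := by
          rw [abs_mul, abs_of_nonneg hqN0]
      _ ≤ (1 - p) ^ N * ‖(Δ * ρ).trace‖ := by
          gcongr
          exact Complex.abs_re_le_norm _
      _ ≤ (1 - p) ^ N * ‖Δ‖ := by gcongr
  -- assemble
  have hA : |a| ≤ ‖O‖ := score_bound U hU
  have hB : |b| ≤ ‖O‖ := score_bound V hV
  have factored : ((a - c) ^ 2 - R ^ 2) - ((b - c) ^ 2 - R ^ 2) = (a - b) * (a + b - 2 * c) := by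
    ring
  rw [factored, abs_mul]
  have hsum : |a + b - 2 * c| ≤ 2 * ‖O‖ + 2 * |c| := by
    calc |a + b - 2 * c| ≤ |a| + |b| + 2 * |c| := by
          have := abs_sub (a + b) (2 * c)
          calc |a + b - 2 * c| ≤ |a + b| + |2 * c| := abs_sub _ _
            _ ≤ |a| + |b| + 2 * |c| := by
                rw [abs_mul]
                have := abs_add_le a b
                simp only [abs_two]
                linarith
      _ ≤ 2 * ‖O‖ + 2 * |c| := by linarith
  calc |a - b| * |a + b - 2 * c|
      ≤ ((1 - p) ^ N * ‖Δ‖) * (2 * ‖O‖ + 2 * |c|) := by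
        apply mul_le_mul diff_bound hsum (abs_nonneg _)
        positivity
    _ = (1 - p) ^ N * (2 * ‖O‖ + 2 * |c|) * ‖Δ‖ := by ring
end
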